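/- Let A ≅ ℝ^ℓ act smoothly and locally freely on a compact manifold M, with commuting generating vector fields X_H (H ∈ 𝔞), and suppose some H₀ ∈ 𝔞 is transversely hyperbolic with splitting TM = E₀ ⊕ E_u ⊕ E_s. Then the set of H ∈ 𝔞 that are transversely hyperbolic with the same splitting is an open convex cone in 𝔞 containing H₀. -/

import Mathlib

/-- A parameter `H ∈ 𝔞` is *transversely hyperbolic* for the Anosov action with
derivative cocycle `d`, flow `φ` and splitting data `Es`, `Eu` if there are `C, ν > 0`
such that the differential of the time-`t` flow of `X_H` contracts the stable bundle
`Es` at rate `C e^{−νt}` for `t ≥ 0` and the unstable bundle `Eu` at rate `C e^{−ν|t|}`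
for `t ≤ 0`. -/
def TransverselyHyperbolic {𝔞 M F : Type*} [NormedAddCommGroup 𝔞] [NormedSpace ℝ 𝔞]
    [NormedAddCommGroup F] [NormedSpace ℝ F]
    (φ : 𝔞 → M → M) (d : 𝔞 → M → (F →L[ℝ] F))
    (Es Eu : M → Submodule ℝ F) (H : 𝔞) : Prop :=
  ∃ C > (0 : ℝ), ∃ ν > (0 : ℝ),
    (∀ (x : M) (t : ℝ), 0 ≤ t → ∀ w ∈ Es x,
      ‖d (t • H) x w‖ ≤ C * Real.exp (-ν * t) * ‖w‖) ∧
    (∀ (x : M) (t : ℝ), t ≤ 0 → ∀ w ∈ Eu x,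
      ‖d (t • H) x w‖ ≤ C * Real.exp (-ν * |t|) * ‖w‖)

/-- Iteration lemma: if a one-parameter cocycle `D` contracts a bundle `E` at rate
`C e^{-ν t}` on a fixed time window `[0, T]` on which the contraction beats `C`
(i.e. `C e^{-ν T} ≤ e^{-(ν/2) T}`), then it contracts at rate `C e^{-(ν/2) t}`
for all `t ≥ 0`. -/
lemma iter_bound {M F : Type*} [NormedAddCommGroup F] [NormedSpace ℝ F]
    (D : ℝ → M → (F →L[ℝ] F)) (Φ : ℝ → M → M) (E : M → Submodule ℝ F)
    (hD : ∀ (s t : ℝ) (x : M), D (s + t) x = (D s (Φ t x)).comp (D t x))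
    (hE : ∀ (t : ℝ) (x : M), ∀ w ∈ E x, D t x w ∈ E (Φ t x))
    (C ν T : ℝ) (hC : 0 < C) (hν : 0 < ν) (hT : 0 < T)
    (hstep : ∀ t, 0 ≤ t → t ≤ T → ∀ x, ∀ w ∈ E x,
      ‖D t x w‖ ≤ C * Real.exp (-ν * t) * ‖w‖)
    (hcontr : C * Real.exp (-ν * T) ≤ Real.exp (-(ν/2) * T)) :
    ∀ t, 0 ≤ t → ∀ x, ∀ w ∈ E x, ‖D t x w‖ ≤ C * Real.exp (-(ν/2) * t) * ‖w‖ := by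
  have key : ∀ n : ℕ, ∀ t, (n : ℝ) * T ≤ t → t ≤ ((n : ℝ) + 1) * T →
      ∀ x, ∀ w ∈ E x, ‖D t x w‖ ≤ C * Real.exp (-(ν/2) * t) * ‖w‖ := by
    intro n
    induction n with
    | zero =>
      intro t h1 h2 x w hw
      simp only [Nat.cast_zero, zero_mul, zero_add, one_mul] at h1 h2
      refine (hstep t h1 h2 x w hw).trans ?_
      have : Real.exp (-ν * t) ≤ Real.exp (-(ν/2) * t) :=
        Real.exp_le_exp.mpr (by nlinarith)
      have hwn : (0:ℝ) ≤ ‖w‖ := norm_nonneg _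
      have := mul_le_mul_of_nonneg_right (mul_le_mul_of_nonneg_left this hC.le) hwn
      linarith
    | succ n ih =>
      intro t h1 h2 x w hw
      have h1' : (n : ℝ) * T ≤ t - T := by push_cast at h1 ⊢; linarith
      have h2' : t - T ≤ ((n : ℝ) + 1) * T := by push_cast at h2 ⊢; linarith
      have ht' : 0 ≤ t - T := le_trans (by positivity) h1'
      have hdec : D t x = (D T (Φ (t - T) x)).comp (D (t - T) x) := by
        have := hD T (t - T) x
        rwa [show T + (t - T) = t by ring] at this
      have hmem := hE (t - T) x w hw
      have hb1 := ih (t - T) h1' h2' x w hw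
      have hb2 := hstep T hT.le le_rfl (Φ (t - T) x) (D (t - T) x w) hmem
      have : ‖D t x w‖ ≤ C * Real.exp (-ν * T) * ‖D (t - T) x w‖ := by
        rw [hdec]; exact hb2
      refine this.trans ?_
      have e1 : C * Real.exp (-ν * T) ≤ Real.exp (-(ν/2) * T) := hcontr
      have e2 : ‖D (t - T) x w‖ ≤ C * Real.exp (-(ν/2) * (t - T)) * ‖w‖ := hb1
      have hpos1 : (0:ℝ) < Real.exp (-(ν/2) * (t - T)) := Real.exp_pos _
      have hwn : (0:ℝ) ≤ ‖w‖ := norm_nonneg _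
      have hDn : (0:ℝ) ≤ ‖D (t - T) x w‖ := norm_nonneg _
      calc C * Real.exp (-ν * T) * ‖D (t - T) x w‖
          ≤ Real.exp (-(ν/2) * T) * (C * Real.exp (-(ν/2) * (t - T)) * ‖w‖) := by
            apply mul_le_mul e1 e2 hDn (Real.exp_pos _).le
        _ = C * (Real.exp (-(ν/2) * T) * Real.exp (-(ν/2) * (t - T))) * ‖w‖ := by ring
        _ = C * Real.exp (-(ν/2) * t) * ‖w‖ := by
            rw [← Real.exp_add]; ring_nf
  intro t ht x w hw
  have hdiv : (0:ℝ) ≤ t / T := div_nonneg ht hT.le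
  set n : ℕ := ⌊t / T⌋.toNat with hn
  have hz : (n : ℤ) = ⌊t / T⌋ := Int.toNat_of_nonneg (Int.floor_nonneg.mpr hdiv)
  have hcast : (n : ℝ) = (⌊t / T⌋ : ℝ) := by exact_mod_cast hz
  have h1 : (n : ℝ) * T ≤ t := by
    rw [hcast]
    have := Int.floor_le (t / T)
    calc (⌊t / T⌋ : ℝ) * T ≤ (t / T) * T := by nlinarith
      _ = t := div_mul_cancel₀ t hT.ne'
  have h2 : t ≤ ((n : ℝ) + 1) * T := by
    rw [hcast]
    have := (Int.lt_floor_add_one (t / T)).le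
    calc t = (t / T) * T := (div_mul_cancel₀ t hT.ne').symm
      _ ≤ ((⌊t / T⌋ : ℝ) + 1) * T := by nlinarith
  exact key n t h1 h2 x w hw

theorem weyl_chamber_open_convex_cone
    {𝔞 M F : Type*} [NormedAddCommGroup 𝔞] [NormedSpace ℝ 𝔞]
    [NormedAddCommGroup F] [NormedSpace ℝ F]
    (φ : 𝔞 → M → M)
    (hφ0 : φ 0 = id) (hφ : ∀ (a b : 𝔞) (x : M), φ (a + b) x = φ a (φ b x))
    (d : 𝔞 → M → (F →L[ℝ] F))
    (hd0 : ∀ x : M, d 0 x = ContinuousLinearMap.id ℝ F)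
    (hd : ∀ (a b : 𝔞) (x : M), d (a + b) x = (d a (φ b x)).comp (d b x))
    (Es Eu : M → Submodule ℝ F)
    (hEs : ∀ (a : 𝔞) (x : M), ∀ w ∈ Es x, d a x w ∈ Es (φ a x))
    (hEu : ∀ (a : 𝔞) (x : M), ∀ w ∈ Eu x, d a x w ∈ Eu (φ a x))
    (hsmall : ∀ ε > (0 : ℝ), ∃ η > (0 : ℝ), ∀ a : 𝔞, ‖a‖ < η →
      ∀ (x : M) (w : F), ‖d a x w‖ ≤ (1 + ε) * ‖w‖)
    (H₀ : 𝔞) (hH₀ : TransverselyHyperbolic φ d Es Eu H₀) :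
    H₀ ∈ {H : 𝔞 | TransverselyHyperbolic φ d Es Eu H} ∧
    IsOpen {H : 𝔞 | TransverselyHyperbolic φ d Es Eu H} ∧
    Convex ℝ {H : 𝔞 | TransverselyHyperbolic φ d Es Eu H} ∧
    ∀ c : ℝ, 0 < c → ∀ H, TransverselyHyperbolic φ d Es Eu H →
      TransverselyHyperbolic φ d Es Eu (c • H) := by
  refine ⟨hH₀, ?_, ?_, ?_⟩
  · -- openness
    rw [Metric.isOpen_iff]
    rintro H ⟨C, hC, ν, hν, hEsb, hEub⟩
    obtain ⟨η, hη, hsm⟩ := hsmall 1 one_pos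
    set T : ℝ := max 1 (Real.log (2 * C) / (ν / 2)) with hTdef
    have hT : 0 < T := lt_of_lt_of_le one_pos (le_max_left _ _)
    have hcontr : (2 * C) * Real.exp (-ν * T) ≤ Real.exp (-(ν/2) * T) := by
      have h2C : (0:ℝ) < 2 * C := by linarith
      have hlog : Real.log (2 * C) ≤ (ν/2) * T := by
        have := le_max_right 1 (Real.log (2 * C) / (ν / 2))
        have hν2 : (0:ℝ) < ν / 2 := by linarith
        calc Real.log (2 * C) = (Real.log (2 * C) / (ν/2)) * (ν/2) := by
              field_simp
          _ ≤ T * (ν/2) := by nlinarith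
          _ = (ν/2) * T := by ring
      have h1 : (2 * C) ≤ Real.exp ((ν/2) * T) := by
        calc (2 * C) = Real.exp (Real.log (2 * C)) := (Real.exp_log h2C).symm
          _ ≤ Real.exp ((ν/2) * T) := Real.exp_le_exp.mpr hlog
      calc (2 * C) * Real.exp (-ν * T) ≤ Real.exp ((ν/2) * T) * Real.exp (-ν * T) := by
            nlinarith [Real.exp_pos (-ν * T)]
        _ = Real.exp (-(ν/2) * T) := by rw [← Real.exp_add]; ring_nf
    refine ⟨η / (2 * T), by positivity, ?_⟩
    intro H' hH'
    rw [Metric.mem_ball, dist_eq_norm] at hH'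
    -- small-time bound valid uniformly on [-T, T]
    have hshort : ∀ t : ℝ, |t| ≤ T → ∀ (x : M) (w : F),
        ‖d (t • H') x w‖ ≤ 2 * ‖d (t • H) x w‖ := by
      intro t htT x w
      have hdecomp : t • H' = t • (H' - H) + t • H := by
        rw [← smul_add, sub_add_cancel]
      rw [hdecomp, hd]
      have hnorm : ‖t • (H' - H)‖ < η := by
        rw [norm_smul]
        calc |t| * ‖H' - H‖ ≤ T * (η / (2 * T)) := by
              apply mul_le_mul htT hH'.le (norm_nonneg _) hT.le
          _ = η / 2 := by field_simp
          _ < η := by linarith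
      have h := hsm (t • (H' - H)) hnorm (φ (t • H) x) (d (t • H) x w)
      norm_num at h
      simpa using h
    -- stable direction
    have hEs' : ∀ (x : M) (t : ℝ), 0 ≤ t → ∀ w ∈ Es x,
        ‖d (t • H') x w‖ ≤ (2 * C) * Real.exp (-(ν/2) * t) * ‖w‖ := by
      have := iter_bound (fun t x => d (t • H') x) (fun t x => φ (t • H') x) Es
        (fun s t x => by rw [← hd, ← add_smul])
        (fun t x w hw => hEs (t • H') x w hw)
        (2 * C) ν T (by linarith) hν hT
        (fun t ht htT x w hw => by
          have h1 := hshort t (by rwa [abs_of_nonneg ht]) x w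
          have h2 := hEsb x t ht w hw
          calc ‖d (t • H') x w‖ ≤ 2 * ‖d (t • H) x w‖ := h1
            _ ≤ 2 * (C * Real.exp (-ν * t) * ‖w‖) := by linarith
            _ = 2 * C * Real.exp (-ν * t) * ‖w‖ := by ring)
        hcontr
      intro x t ht w hw
      exact this t ht x w hw
    -- unstable direction
    have hEu' : ∀ (x : M) (t : ℝ), t ≤ 0 → ∀ w ∈ Eu x,
        ‖d (t • H') x w‖ ≤ (2 * C) * Real.exp (-(ν/2) * |t|) * ‖w‖ := by
      have main := iter_bound (fun t x => d ((-t) • H') x) (fun t x => φ ((-t) • H') x) Eu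
        (fun s t x => by rw [← hd, ← add_smul, ← neg_add])
        (fun t x w hw => hEu ((-t) • H') x w hw)
        (2 * C) ν T (by linarith) hν hT
        (fun t ht htT x w hw => by
          have h1 := hshort (-t) (by rwa [abs_neg, abs_of_nonneg ht]) x w
          have h2 := hEub x (-t) (by linarith) w hw
          rw [abs_neg, abs_of_nonneg ht] at h2
          calc ‖d ((-t) • H') x w‖ ≤ 2 * ‖d ((-t) • H) x w‖ := h1
            _ ≤ 2 * (C * Real.exp (-ν * t) * ‖w‖) := by linarith
            _ = 2 * C * Real.exp (-ν * t) * ‖w‖ := by ring)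
        hcontr
      intro x t ht w hw
      have h := main (-t) (by linarith) x w hw
      simp only [neg_neg] at h
      rw [abs_of_nonpos ht]
      exact h
    exact ⟨2 * C, by linarith, ν / 2, by linarith, hEs', hEu'⟩
  · -- convexity
    rintro H₁ ⟨C₁, hC₁, ν₁, hν₁, hEs₁, hEu₁⟩ H₂ ⟨C₂, hC₂, ν₂, hν₂, hEs₂, hEu₂⟩ a b ha hb hab
    refine ⟨C₁ * C₂, by positivity, a * ν₁ + b * ν₂, ?_, ?_, ?_⟩
    · nlinarith [mul_le_mul_of_nonneg_left (min_le_left ν₁ ν₂) ha,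
        mul_le_mul_of_nonneg_left (min_le_right ν₁ ν₂) hb,
        lt_min hν₁ hν₂]
    · intro x t ht w hw
      have hdecomp : t • (a • H₁ + b • H₂) = (t * a) • H₁ + (t * b) • H₂ := by
        rw [smul_add, smul_smul, smul_smul]
      rw [hdecomp, hd]
      have hmem := hEs ((t * b) • H₂) x w hw
      have h2 := hEs₂ x (t * b) (mul_nonneg ht hb) w hw
      have h1 := hEs₁ (φ ((t * b) • H₂) x) (t * a) (mul_nonneg ht ha)
        (d ((t * b) • H₂) x w) hmem
      calc ‖(d ((t * a) • H₁) (φ ((t * b) • H₂) x)).comp (d ((t * b) • H₂) x) w‖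
          = ‖d ((t * a) • H₁) (φ ((t * b) • H₂) x) (d ((t * b) • H₂) x w)‖ := rfl
        _ ≤ C₁ * Real.exp (-ν₁ * (t * a)) * ‖d ((t * b) • H₂) x w‖ := h1
        _ ≤ C₁ * Real.exp (-ν₁ * (t * a)) * (C₂ * Real.exp (-ν₂ * (t * b)) * ‖w‖) := by
            apply mul_le_mul_of_nonneg_left h2 (by positivity)
        _ = C₁ * C₂ * (Real.exp (-ν₁ * (t * a)) * Real.exp (-ν₂ * (t * b))) * ‖w‖ := by
            ring
        _ = C₁ * C₂ * Real.exp (-(a * ν₁ + b * ν₂) * t) * ‖w‖ := by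
            rw [← Real.exp_add]; ring_nf
    · intro x t ht w hw
      have hdecomp : t • (a • H₁ + b • H₂) = (t * a) • H₁ + (t * b) • H₂ := by
        rw [smul_add, smul_smul, smul_smul]
      rw [hdecomp, hd]
      have hmem := hEu ((t * b) • H₂) x w hw
      have h2 := hEu₂ x (t * b) (mul_nonpos_of_nonpos_of_nonneg ht hb) w hw
      have h1 := hEu₁ (φ ((t * b) • H₂) x) (t * a)
        (mul_nonpos_of_nonpos_of_nonneg ht ha) (d ((t * b) • H₂) x w) hmem
      have habs1 : |t * a| = |t| * a := by rw [abs_mul, abs_of_nonneg ha]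
      have habs2 : |t * b| = |t| * b := by rw [abs_mul, abs_of_nonneg hb]
      rw [habs1] at h1; rw [habs2] at h2
      calc ‖(d ((t * a) • H₁) (φ ((t * b) • H₂) x)).comp (d ((t * b) • H₂) x) w‖
          = ‖d ((t * a) • H₁) (φ ((t * b) • H₂) x) (d ((t * b) • H₂) x w)‖ := rfl
        _ ≤ C₁ * Real.exp (-ν₁ * (|t| * a)) * ‖d ((t * b) • H₂) x w‖ := h1
        _ ≤ C₁ * Real.exp (-ν₁ * (|t| * a)) * (C₂ * Real.exp (-ν₂ * (|t| * b)) * ‖w‖) := by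
            apply mul_le_mul_of_nonneg_left h2 (by positivity)
        _ = C₁ * C₂ * (Real.exp (-ν₁ * (|t| * a)) * Real.exp (-ν₂ * (|t| * b))) * ‖w‖ := by
            ring
        _ = C₁ * C₂ * Real.exp (-(a * ν₁ + b * ν₂) * |t|) * ‖w‖ := by
            rw [← Real.exp_add]; ring_nf
  · -- cone
    rintro c hc H ⟨C, hC, ν, hν, hEsb, hEub⟩
    refine ⟨C, hC, ν * c, by positivity, ?_, ?_⟩
    · intro x t ht w hw
      rw [smul_smul]
      have h := hEsb x (t * c) (mul_nonneg ht hc.le) w hw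
      rw [show -(ν * c) * t = -ν * (t * c) by ring]
      exact h
    · intro x t ht w hw
      rw [smul_smul]
      have h := hEub x (t * c) (mul_nonpos_of_nonpos_of_nonneg ht hc.le) w hw
      rw [show -(ν * c) * |t| = -ν * |t * c| by rw [abs_mul, abs_of_nonneg hc.le]; ring]
      exact h
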